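/- (Stability of interpolation under alphabet extension) Let 1 ≤ c ≤ d. In k[x_1,...,x_d, v_1,...,v_d], for each 1 ≤ i ≤ c one has Σ_{k=1}^{c} x_i^{k-1} · ( v_k + (-1)^{c-k} Σ_{l=c+1}^{d} s(l−c−1, c−k)(x_1,...,x_c) · v_l ) = Σ_{k=1}^{d} x_i^{k-1} v_k, where s(p,q)(X) := Σ_{m+n=q}(-1)^m h_{p+m+1}(X) e_n(X) is the hook Schur polynomial s_{(p+1,1^q)} in X = {x_1,...,x_c}. -/

import Mathlib

open Finset

variable {R : Type*} [CommRing R]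

/-- The elementary symmetric polynomial `e k` of a finite family of ring elements. -/
def esym {ι : Type*} [Fintype ι] [DecidableEq ι] (x : ι → R) (k : ℕ) : R :=
  ∑ s ∈ Finset.univ.powersetCard k, ∏ i ∈ s, x i

/-- The complete homogeneous symmetric polynomial `h k` of a finite family of ring
elements (sum of all monomials of degree `k`). -/
def hsym {ι : Type*} [Fintype ι] [DecidableEq ι] (x : ι → R) (k : ℕ) : R :=
  ∑ μ : Sym ι k, (μ.1.map x).prod

/-- The hook Schur polynomial `s(i,j) = s_{(i+1,1^j)}` of a finite family. -/
def hookS {ι : Type*} [Fintype ι] [DecidableEq ι] (x : ι → R) (i j : ℕ) : R :=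
  ∑ p ∈ Finset.HasAntidiagonal.antidiagonal j, (-1 : R) ^ p.1 * hsym x (i + p.1 + 1) * esym x p.2

/-- The complete symmetric function `h j` of the difference alphabet `X - X'`. -/
def hdiff {ι κ : Type*} [Fintype ι] [DecidableEq ι] [Fintype κ] [DecidableEq κ]
    (x : ι → R) (x' : κ → R) (j : ℕ) : R :=
  ∑ p ∈ Finset.HasAntidiagonal.antidiagonal j, (-1 : R) ^ p.2 * hsym x p.1 * esym x' p.2

/-- The elementary symmetric function `e j` of the difference alphabet `X - X'`. -/
def ediff {ι κ : Type*} [Fintype ι] [DecidableEq ι] [Fintype κ] [DecidableEq κ]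
    (x : ι → R) (x' : κ → R) (j : ℕ) : R :=
  ∑ p ∈ Finset.HasAntidiagonal.antidiagonal j, (-1 : R) ^ p.2 * esym x p.1 * hsym x' p.2

/-- The power sum `p k` of a finite family of ring elements. -/
def psum' {ι : Type*} [Fintype ι] (x : ι → R) (k : ℕ) : R :=
  ∑ i, x i ^ k

/-- The elementary symmetric polynomial of a multiset of ring elements. -/
def esymM (s : Multiset R) (k : ℕ) : R :=
  ((s.powersetCard k).map Multiset.prod).sum

section InterpolationAux

/-! ### Auxiliary lemmas -/

lemma esym_eq_esymM' {ι : Type*} [Fintype ι] [DecidableEq ι] (x : ι → R) (k : ℕ) :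
    esym x k = (Multiset.map x Finset.univ.val).esymm k := by
  rw [esym, ← Finset.esymm_map_val]

lemma esymm_cons' (a : R) (s : Multiset R) (n : ℕ) :
    (a ::ₘ s).esymm (n+1) = s.esymm (n+1) + a * s.esymm n := by
  unfold Multiset.esymm
  rw [Multiset.powersetCard_cons, Multiset.map_add, Multiset.sum_add, Multiset.map_map]
  congr 1
  have : (Multiset.map (Multiset.prod ∘ Multiset.cons a) (Multiset.powersetCard n s)) =
      Multiset.map (fun t => a * t.prod) (Multiset.powersetCard n s) := by
    apply Multiset.map_congr rfl
    intro t _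
    simp
  rw [this]
  rw [← Multiset.sum_map_mul_left]

lemma univ_option_val' (ι : Type*) [Fintype ι] :
    (Finset.univ : Finset (Option ι)).val = none ::ₘ Multiset.map some Finset.univ.val := by
  rfl

lemma esym_option' {ι : Type*} [Fintype ι] [DecidableEq ι] (x : Option ι → R) (n : ℕ) :
    esym x (n+1) = esym (x ∘ some) (n+1) + x none * esym (x ∘ some) n := by
  rw [esym_eq_esymM', esym_eq_esymM', esym_eq_esymM', univ_option_val',
    Multiset.map_cons, Multiset.map_map, esymm_cons']

lemma hsym_option' {ι : Type*} [Fintype ι] [DecidableEq ι] (x : Option ι → R) (n : ℕ) :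
    hsym x (n+1) = x none * hsym x n + hsym (x ∘ some) (n+1) := by
  rw [hsym, ← Equiv.sum_comp (symOptionSuccEquiv (α := ι) (n := n)).symm, Fintype.sum_sum_type]
  congr 1
  · rw [hsym, Finset.mul_sum]
    apply Finset.sum_congr rfl
    intro μ _
    have : (symOptionSuccEquiv (α := ι) (n := n)).symm (Sum.inl μ) = none ::ₛ μ := rfl
    rw [this]
    simp [Sym.cons, Multiset.map_cons, Multiset.prod_cons]
  · rw [hsym]
    apply Finset.sum_congr rfl
    intro ν _
    have : (symOptionSuccEquiv (α := ι) (n := n)).symm (Sum.inr ν)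
        = ν.map Function.Embedding.some := rfl
    rw [this]
    simp [Sym.map, Multiset.map_map]

lemma esym_reindex' {ι κ : Type*} [Fintype ι] [DecidableEq ι] [Fintype κ] [DecidableEq κ]
    (e : ι ≃ κ) (x : κ → R) (n : ℕ) : esym (x ∘ e) n = esym x n := by
  rw [esym_eq_esymM', esym_eq_esymM']
  congr 1
  have : (Finset.univ : Finset κ).val = Multiset.map e (Finset.univ : Finset ι).val := by
    have := Finset.map_univ_equiv e
    rw [← this]
    rfl
  rw [this, Multiset.map_map]

lemma hsym_reindex' {ι κ : Type*} [Fintype ι] [DecidableEq ι] [Fintype κ] [DecidableEq κ]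
    (e : ι ≃ κ) (x : κ → R) (n : ℕ) : hsym (x ∘ e) n = hsym x n := by
  rw [hsym, hsym]
  apply Fintype.sum_equiv (Sym.equivCongr e)
  intro μ
  have : (Sym.equivCongr e μ).1 = Multiset.map e μ.1 := rfl
  rw [this, Multiset.map_map]

lemma esym_empty' {ι : Type*} [Fintype ι] [DecidableEq ι] [IsEmpty ι] (x : ι → R) (n : ℕ)
    (hn : 1 ≤ n) : esym x n = 0 := by
  rw [esym]
  have : (Finset.univ : Finset ι).powersetCard n = ∅ := by
    apply Finset.powersetCard_eq_empty.mpr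
    simp [Finset.card_univ]
    omega
  rw [this, Finset.sum_empty]

lemma hsym_empty' {ι : Type*} [Fintype ι] [DecidableEq ι] [IsEmpty ι] (x : ι → R) (n : ℕ)
    (hn : 1 ≤ n) : hsym x n = 0 := by
  obtain ⟨m, rfl⟩ : ∃ m, n = m + 1 := ⟨n - 1, by omega⟩
  rw [hsym]
  rw [Finset.univ_eq_empty, Finset.sum_empty]

lemma esym_zero' {ι : Type*} [Fintype ι] [DecidableEq ι] (x : ι → R) : esym x 0 = 1 := by
  rw [esym, Finset.powersetCard_zero, Finset.sum_singleton, Finset.prod_empty]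

lemma hsym_zero' {ι : Type*} [Fintype ι] [DecidableEq ι] (x : ι → R) : hsym x 0 = 1 := by
  rw [hsym]
  rw [Fintype.sum_unique]
  rfl

/-- The alternating convolution `∑ (-1)^q e_q h_{N-q}`. -/
def CC' {ι : Type*} [Fintype ι] [DecidableEq ι] (x : ι → R) (N : ℕ) : R :=
  ∑ q ∈ Finset.range (N+1), (-1:R)^q * esym x q * hsym x (N-q)

def DD' {ι : Type*} [Fintype ι] [DecidableEq ι] (x : Option ι → R) (M : ℕ) : R :=
  ∑ q ∈ Finset.range (M+1), (-1:R)^q * esym (x ∘ some) q * hsym x (M-q)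

lemma DD_rec' {ι : Type*} [Fintype ι] [DecidableEq ι] (x : Option ι → R) (K : ℕ) :
    DD' x (K+1) = CC' (x ∘ some) (K+1) + x none * DD' x K := by
  have L : DD' x (K+1) = (∑ q ∈ Finset.range (K+1),
      ((-1:R)^q * esym (x ∘ some) q * hsym (x ∘ some) (K+1-q)
        + x none * ((-1:R)^q * esym (x ∘ some) q * hsym x (K-q))))
      + (-1:R)^(K+1) * esym (x ∘ some) (K+1) * hsym x 0 := by
    rw [DD', Finset.sum_range_succ]
    congr 1
    · apply Finset.sum_congr rfl
      intro q hq
      rw [Finset.mem_range] at hq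
      have h1 : K + 1 - q = (K - q) + 1 := by omega
      rw [h1, hsym_option', ← h1]
      ring
    · rw [show K + 1 - (K+1) = 0 from by omega]
  have Rr : CC' (x ∘ some) (K+1) = (∑ q ∈ Finset.range (K+1),
      (-1:R)^q * esym (x ∘ some) q * hsym (x ∘ some) (K+1-q))
      + (-1:R)^(K+1) * esym (x ∘ some) (K+1) * hsym (x ∘ some) 0 := by
    rw [CC', Finset.sum_range_succ, show K + 1 - (K+1) = 0 from by omega]
  rw [L, Rr, Finset.sum_add_distrib, ← Finset.mul_sum, hsym_zero', hsym_zero', DD']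
  ring

lemma CC_rec' {ι : Type*} [Fintype ι] [DecidableEq ι] (x : Option ι → R) (K : ℕ) :
    CC' x (K+1) = DD' x (K+1) - x none * DD' x K := by
  have L : CC' x (K+1) = (∑ q ∈ Finset.range (K+1),
      ((-1:R)^(q+1) * esym (x ∘ some) (q+1) * hsym x (K-q)
        - x none * ((-1:R)^q * esym (x ∘ some) q * hsym x (K-q))))
      + (-1:R)^0 * esym x 0 * hsym x (K+1) := by
    rw [CC', Finset.sum_range_succ']
    congr 1
    · apply Finset.sum_congr rfl
      intro q hq
      rw [Finset.mem_range] at hq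
      rw [show K + 1 - (q+1) = K - q from by omega, esym_option']
      ring
  have Rr : DD' x (K+1) = (∑ q ∈ Finset.range (K+1),
      (-1:R)^(q+1) * esym (x ∘ some) (q+1) * hsym x (K-q))
      + (-1:R)^0 * esym (x ∘ some) 0 * hsym x (K+1) := by
    rw [DD', Finset.sum_range_succ', show K + 1 - 0 = K + 1 from by omega]
    congr 1
    apply Finset.sum_congr rfl
    intro q hq
    rw [show K + 1 - (q+1) = K - q from by omega]
  rw [L, Rr, Finset.sum_sub_distrib, ← Finset.mul_sum, esym_zero', esym_zero', DD']
  ring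

lemma CC_option' {ι : Type*} [Fintype ι] [DecidableEq ι] (x : Option ι → R) (N : ℕ)
    (hN : 1 ≤ N) : CC' x N = CC' (x ∘ some) N := by
  obtain ⟨K, rfl⟩ : ∃ K, N = K + 1 := ⟨N - 1, by omega⟩
  rw [CC_rec', DD_rec']
  ring

lemma CC_reindex' {ι κ : Type*} [Fintype ι] [DecidableEq ι] [Fintype κ] [DecidableEq κ]
    (e : ι ≃ κ) (x : κ → R) (N : ℕ) : CC' (x ∘ e) N = CC' x N := by
  rw [CC', CC']
  exact Finset.sum_congr rfl fun q _ => by rw [esym_reindex', hsym_reindex']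

lemma CC_fin_eq_zero' : ∀ (c : ℕ) (x : Fin c → R) (N : ℕ), 1 ≤ N → CC' x N = 0 := by
  intro c
  induction c with
  | zero =>
    intro x N hN
    rw [CC']
    apply Finset.sum_eq_zero
    intro q hq
    rcases Nat.eq_zero_or_pos q with h | h
    · subst h
      rw [hsym_empty' x (N - 0) (by omega)]
      ring
    · rw [esym_empty' x q (by omega)]
      ring
  | succ c ih =>
    intro x N hN
    have := CC_reindex' (R := R) (finSuccEquiv c).symm x N
    rw [← this, CC_option' _ N hN, ih _ N hN]

lemma CC_zero' {ι : Type*} [Fintype ι] [DecidableEq ι] (x : ι → R) : CC' x 0 = 1 := by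
  rw [CC']
  simp [esym_zero', hsym_zero']

lemma tri (M : ℕ) (f : ℕ → ℕ → R) :
    ∑ u ∈ Finset.range (M+1), ∑ n ∈ Finset.range (u+1), f n (u-n)
      = ∑ n ∈ Finset.range (M+1), ∑ v ∈ Finset.range (M+1-n), f n v := by
  have h := Finset.sum_Ico_Ico_comm 0 (M+1) (fun n u => f n (u - n))
  simp only [Finset.range_eq_Ico] at *
  rw [← h]
  apply Finset.sum_congr rfl
  intro n hn
  rw [Finset.mem_Ico] at hn
  rw [Finset.sum_Ico_eq_sum_range, Finset.range_eq_Ico]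
  apply Finset.sum_congr rfl
  intro k hk
  rw [Finset.mem_Ico] at hk
  congr 1
  omega

lemma tri' (M : ℕ) (f : ℕ → ℕ → R) :
    ∑ n ∈ Finset.range (M+1), ∑ v ∈ Finset.range (M+1-n), f n v
      = ∑ v ∈ Finset.range (M+1), ∑ n ∈ Finset.range (M+1-v), f n v := by
  rw [← tri M f, ← tri M (fun v n => f n v)]
  apply Finset.sum_congr rfl
  intro u hu
  rw [Finset.mem_range] at hu
  have := Finset.sum_range_reflect (fun j => f j (u - j)) (u+1)
  rw [← this]
  apply Finset.sum_congr rfl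
  intro j hj
  rw [Finset.mem_range] at hj
  congr 1
  omega

/-- `A_u = ∑_{n ≤ u} (-1)^n e_n y^(u-n)`. -/
def AA {c : ℕ} (X : Fin c → R) (y : R) (u : ℕ) : R :=
  ∑ n ∈ Finset.range (u+1), (-1:R)^n * esym X n * y^(u-n)

lemma AA_succ {c : ℕ} (X : Fin c → R) (y : R) (u : ℕ) :
    AA X y (u+1) = y * AA X y u + (-1:R)^(u+1) * esym X (u+1) := by
  rw [AA, Finset.sum_range_succ, AA, Finset.mul_sum]
  rw [show u + 1 - (u+1) = 0 from by omega, pow_zero]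
  congr 1
  · apply Finset.sum_congr rfl
    intro n hn
    rw [Finset.mem_range] at hn
    rw [show u + 1 - n = (u - n) + 1 from by omega, pow_succ]
    ring
  · ring

lemma esym_gt {c : ℕ} (X : Fin c → R) (n : ℕ) (hn : c < n) : esym X n = 0 := by
  rw [esym]
  have : (Finset.univ : Finset (Fin c)).powersetCard n = ∅ := by
    apply Finset.powersetCard_eq_empty.mpr
    simpa using hn
  rw [this, Finset.sum_empty]

lemma AA_c_eq_prod {c : ℕ} (X : Fin c → R) (y : R) :
    AA X y c = (Multiset.map (fun t => y - t) (Multiset.map X Finset.univ.val)).prod := by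
  have h := Multiset.prod_X_sub_X_eq_sum_esymm (Multiset.map X Finset.univ.val)
  have hcard : Multiset.card (Multiset.map X Finset.univ.val) = c := by
    simp
  have := congrArg (Polynomial.eval y) h
  rw [Polynomial.eval_multiset_prod, Multiset.map_map] at this
  rw [Polynomial.eval_finset_sum] at this
  rw [hcard] at this
  have lhs_eq : (Multiset.map (Polynomial.eval y ∘ fun t => Polynomial.X - Polynomial.C t)
      (Multiset.map X Finset.univ.val)).prod
      = (Multiset.map (fun t => y - t) (Multiset.map X Finset.univ.val)).prod := by
    congr 1
    apply Multiset.map_congr rfl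
    intro t _
    simp
  simp only [Polynomial.eval_mul, Polynomial.eval_pow, Polynomial.eval_neg,
    Polynomial.eval_one, Polynomial.eval_C, Polynomial.eval_X] at this
  rw [lhs_eq] at this
  rw [this, AA]
  apply Finset.sum_congr rfl
  intro n hn
  rw [esym_eq_esymM']
  ring

lemma AA_root {c : ℕ} (X : Fin c → R) (i0 : Fin c) : AA X (X i0) c = 0 := by
  rw [AA_c_eq_prod]
  apply Multiset.prod_eq_zero
  rw [Multiset.map_map]
  apply Multiset.mem_map.mpr
  exact ⟨i0, Finset.mem_univ_val i0, by simp⟩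

lemma AA_ge {c : ℕ} (X : Fin c → R) (y : R) (h0 : AA X y c = 0) :
    ∀ u, c ≤ u → AA X y u = 0 := by
  intro u hu
  induction u, hu using Nat.le_induction with
  | base => exact h0
  | succ u hu ih =>
    rw [AA_succ, ih, esym_gt X (u+1) (by omega)]
    ring

lemma neg_one_pow_sub (a b : ℕ) (h : b ≤ a) : (-1:R)^(a-b) = (-1)^a * (-1)^b := by
  have hb : (-1:R)^b * (-1)^b = 1 := by rw [← mul_pow]; norm_num
  calc (-1:R)^(a-b) = (-1)^(a-b) * ((-1)^b * (-1)^b) := by rw [hb, mul_one]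
    _ = (-1)^(a-b+b) * (-1)^b := by rw [pow_add]; ring
    _ = (-1)^a * (-1)^b := by rw [Nat.sub_add_cancel h]

lemma WW {c : ℕ} (X : Fin c → R) (y : R) (M : ℕ) :
    ∑ u ∈ Finset.range (M+1), hsym X (M-u) * AA X y u = y^M := by
  have e1 : ∑ u ∈ Finset.range (M+1), hsym X (M-u) * AA X y u
      = ∑ u ∈ Finset.range (M+1), ∑ n ∈ Finset.range (u+1),
          (fun a b => hsym X (M-a-b) * ((-1:R)^a * esym X a * y^b)) n (u-n) := by
    apply Finset.sum_congr rfl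
    intro u hu
    rw [Finset.mem_range] at hu
    rw [AA, Finset.mul_sum]
    apply Finset.sum_congr rfl
    intro n hn
    rw [Finset.mem_range] at hn
    simp only
    rw [show M - n - (u - n) = M - u from by omega]
  rw [e1, tri M (fun a b => hsym X (M-a-b) * ((-1:R)^a * esym X a * y^b)),
    tri' M (fun a b => hsym X (M-a-b) * ((-1:R)^a * esym X a * y^b))]
  have e2 : ∀ v ∈ Finset.range (M+1),
      (∑ n ∈ Finset.range (M+1-v), hsym X (M-n-v) * ((-1:R)^n * esym X n * y^v))
        = y^v * CC' X (M-v) := by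
    intro v hv
    rw [Finset.mem_range] at hv
    rw [CC', Finset.mul_sum, show M + 1 - v = (M - v) + 1 from by omega]
    apply Finset.sum_congr rfl
    intro n hn
    rw [Finset.mem_range] at hn
    rw [show M - n - v = M - v - n from by omega]
    ring
  rw [Finset.sum_congr rfl e2, Finset.sum_range_succ,
    show M - M = 0 from by omega, CC_zero']
  have e3 : ∑ v ∈ Finset.range M, y^v * CC' X (M-v) = 0 := by
    apply Finset.sum_eq_zero
    intro v hv
    rw [Finset.mem_range] at hv
    rw [CC_fin_eq_zero' c X (M-v) (by omega)]
    ring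
  rw [e3]
  ring

lemma keyT {c : ℕ} (hc : 1 ≤ c) (X : Fin c → R) (i0 : Fin c) (p : ℕ) :
    ∑ k ∈ Finset.Icc 1 c, (X i0)^(k-1) * ((-1:R)^(c-k) * hookS X p (c-k))
      = (X i0)^(p+c) := by
  obtain ⟨c', rfl⟩ : ∃ c', c = c'+1 := ⟨c-1, by omega⟩
  set y := X i0 with hy
  rw [show Finset.Icc 1 (c'+1) = Finset.Ico 1 (c'+1+1) from (Finset.Ico_add_one_right_eq_Icc 1 (c'+1)).symm,
    Finset.sum_Ico_eq_sum_range, show c'+1+1-1 = c'+1 from by omega]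
  have e2 : ∀ k ∈ Finset.range (c'+1),
      y^(1+k-1) * ((-1:R)^(c'+1-(1+k)) * hookS X p (c'+1-(1+k)))
        = (fun j => y^(c'-j) * ((-1:R)^j * hookS X p j)) (c'+1-1-k) := by
    intro k hk
    rw [Finset.mem_range] at hk
    simp only
    rw [show 1+k-1 = k from by omega, show c'+1-(1+k) = c'-k from by omega,
      show c'+1-1-k = c'-k from by omega, show c'-(c'-k) = k from by omega]
  rw [Finset.sum_congr rfl e2,
    Finset.sum_range_reflect (fun j => y^(c'-j) * ((-1:R)^j * hookS X p j)) (c'+1)]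
  have e3 : ∀ j ∈ Finset.range (c'+1),
      y^(c'-j) * ((-1:R)^j * hookS X p j)
        = ∑ a ∈ Finset.range (j+1),
            (fun a b => hsym X (p+a+1) * ((-1:R)^b * esym X b * y^(c'-a-b))) a (j-a) := by
    intro j hj
    rw [Finset.mem_range] at hj
    rw [hookS, Finset.Nat.sum_antidiagonal_eq_sum_range_succ_mk, Finset.mul_sum, Finset.mul_sum]
    apply Finset.sum_congr rfl
    intro a ha
    rw [Finset.mem_range] at ha
    simp only
    rw [show c'-a-(j-a) = c'-j from by omega, neg_one_pow_sub j a (by omega)]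
    ring
  rw [Finset.sum_congr rfl e3,
    tri c' (fun a b => hsym X (p+a+1) * ((-1:R)^b * esym X b * y^(c'-a-b)))]
  have e6 : ∀ a ∈ Finset.range (c'+1),
      (∑ b ∈ Finset.range (c'+1-a), hsym X (p+a+1) * ((-1:R)^b * esym X b * y^(c'-a-b)))
        = (fun u => hsym X (p+(c'-u)+1) * AA X y u) (c'+1-1-a) := by
    intro a ha
    rw [Finset.mem_range] at ha
    simp only
    rw [show c'+1-1-a = c'-a from by omega, show c'-(c'-a) = a from by omega,
      AA, Finset.mul_sum, show c'+1-a = (c'-a)+1 from by omega]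
  rw [Finset.sum_congr rfl e6,
    Finset.sum_range_reflect (fun u => hsym X (p+(c'-u)+1) * AA X y u) (c'+1)]
  have e7 : ∀ u ∈ Finset.range (c'+1),
      hsym X (p+(c'-u)+1) * AA X y u = hsym X ((p+c'+1)-u) * AA X y u := by
    intro u hu
    rw [Finset.mem_range] at hu
    rw [show p+(c'-u)+1 = (p+c'+1)-u from by omega]
  rw [Finset.sum_congr rfl e7]
  have e8 : ∑ u ∈ Finset.range (c'+1), hsym X ((p+c'+1)-u) * AA X y u
      = ∑ u ∈ Finset.range (p+c'+1+1), hsym X ((p+c'+1)-u) * AA X y u := by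
    apply Finset.sum_subset
    · apply Finset.range_subset_range.mpr; omega
    · intro u _ hu
      rw [Finset.mem_range, not_lt] at hu
      rw [AA_ge X y (AA_root X i0) u (by omega)]
      ring
  rw [e8, WW, show p+(c'+1) = p+c'+1 from by omega]

end InterpolationAux

theorem interpolation_stability (c d : ℕ) (hc : 1 ≤ c) (hcd : c ≤ d) (x v : ℕ → R)
    (i : ℕ) (hi1 : 1 ≤ i) (hic : i ≤ c) :
    ∑ k ∈ Finset.Icc 1 c, x i ^ (k - 1) *
        (v k + (-1 : R) ^ (c - k) * ∑ l ∈ Finset.Icc (c + 1) d,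
          hookS (fun j : Fin c => x ((j : ℕ) + 1)) (l - c - 1) (c - k) * v l) =
      ∑ k ∈ Finset.Icc 1 d, x i ^ (k - 1) * v k := by
  have hi0 : i - 1 < c := by omega
  set X : Fin c → R := fun j : Fin c => x ((j : ℕ) + 1) with hXdef
  set i0 : Fin c := ⟨i-1, hi0⟩ with hi0def
  have hX : X i0 = x i := by
    show x ((i-1) + 1) = x i
    congr 1
    omega
  have split : ∀ k ∈ Finset.Icc 1 c,
      x i ^ (k - 1) * (v k + (-1 : R) ^ (c - k) * ∑ l ∈ Finset.Icc (c + 1) d,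
          hookS X (l - c - 1) (c - k) * v l)
        = x i ^ (k-1) * v k + ∑ l ∈ Finset.Icc (c+1) d,
            (x i ^ (k-1) * ((-1:R)^(c-k) * hookS X (l-c-1) (c-k))) * v l := by
    intro k _
    rw [mul_add]
    congr 1
    rw [Finset.mul_sum, Finset.mul_sum]
    apply Finset.sum_congr rfl
    intro l _
    ring
  rw [Finset.sum_congr rfl split, Finset.sum_add_distrib, Finset.sum_comm]
  have key : ∀ l ∈ Finset.Icc (c+1) d,
      (∑ k ∈ Finset.Icc 1 c, (x i ^ (k-1) * ((-1:R)^(c-k) * hookS X (l-c-1) (c-k))) * v l)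
        = x i ^ (l-1) * v l := by
    intro l hl
    rw [Finset.mem_Icc] at hl
    rw [← Finset.sum_mul]
    congr 1
    have hk := keyT hc X i0 (l-c-1)
    rw [hX, show l-c-1+c = l-1 from by omega] at hk
    exact hk
  rw [Finset.sum_congr rfl key]
  rw [show Finset.Icc 1 d = Finset.Ico 1 (d+1) from (Finset.Ico_add_one_right_eq_Icc 1 d).symm,
    ← Finset.sum_Ico_consecutive (fun k => x i ^ (k-1) * v k)
      (show 1 ≤ c+1 from by omega) (show c+1 ≤ d+1 from by omega),
    Finset.Ico_add_one_right_eq_Icc 1 c,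
    show Finset.Ico (c+1) (d+1) = Finset.Icc (c+1) d from Finset.Ico_add_one_right_eq_Icc _ _]
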